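/- Let X_1,…,X_n be exchangeable {0,1}-valued random variables that are nontrivial (0 < P(X_1 = 1) < 1), and let X = Σ_{j=1}^n X_j. Fix i ∈ {1,…,n} and suppose (X^i_1,…,X^i_n) has the conditional distribution of (X_1,…,X_n) given X_i = 1. Then X^i = Σ_{j=1}^n X^i_j has the X-size bias distribution. Moreover, if for each i such variables (X^i_1,…,X^i_n) are given and I is a random index with values in {1,…,n} independent of all these variables, then the mixture X^I also has the X-size bias distribution. -/

import Mathlib

open MeasureTheory ProbabilityTheory Finset

/-- `Ys` has the `Y`-size bias distribution:
`E[Y g(Y)] = (E Y) · E[g(Ys)]` for every bounded measurable `g`. -/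
def HasSizeBias {Ω : Type*} [MeasurableSpace Ω] (P : Measure Ω) (Y Ys : Ω → ℝ) : Prop :=
  ∀ g : ℝ → ℝ, Measurable g → (∃ C, ∀ x, |g x| ≤ C) →
    ∫ ω, Y ω * g (Y ω) ∂P = (∫ ω, Y ω ∂P) * ∫ ω, g (Ys ω) ∂P

/-- the sum of a boolean vector -/
private def bS {n : ℕ} (v : Fin n → Bool) : ℝ := ∑ j, if v j then (1 : ℝ) else 0

private lemma bS_abs_le {n : ℕ} (v : Fin n → Bool) : |bS v| ≤ n := by
  have h1 : bS v ≤ n := by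
    unfold bS
    calc (∑ j, if v j then (1:ℝ) else 0) ≤ ∑ _j : Fin n, (1:ℝ) := by
          refine Finset.sum_le_sum fun j _ => ?_
          by_cases h : v j <;> simp [h]
      _ = n := by simp
  have h2 : 0 ≤ bS v := Finset.sum_nonneg fun j _ => by by_cases h : v j <;> simp [h]
  rw [abs_of_nonneg h2]; exact h1

/-- Size biasing a sum of nontrivial exchangeable Bernoulli variables: conditioning the
`i`-th coordinate to be one gives the size bias distribution of the sum, as does any
independent mixture of such conditioned vectors. -/
theorem size_bias_exchangeable_sum {n : ℕ}
    {Ω : Type} [MeasurableSpace Ω] (P : Measure Ω) [IsProbabilityMeasure P]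
    (X : Fin n → Ω → Bool) (hXm : ∀ j, Measurable (X j))
    (hexch : ∀ π : Equiv.Perm (Fin n),
      Measure.map (fun ω => fun j => X (π j) ω) P = Measure.map (fun ω => fun j => X j ω) P)
    (hnontriv : ∀ j, 0 < P {ω | X j ω = true} ∧ P {ω | X j ω = true} < 1)
    (Xc : Fin n → Fin n → Ω → Bool) (hXcm : ∀ i j, Measurable (Xc i j))
    (hcond : ∀ i, Measure.map (fun ω => fun j => Xc i j ω) P
      = Measure.map (fun ω => fun j => X j ω) (P[|{ω | X i ω = true}]))
    (I : Ω → Fin n) (hIm : Measurable I)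
    (hindep : IndepFun I (fun ω => ((fun i j => Xc i j ω), fun j => X j ω)) P) :
    (∀ i, HasSizeBias P (fun ω => ∑ j, (if X j ω then (1 : ℝ) else 0))
        (fun ω => ∑ j, (if Xc i j ω then (1 : ℝ) else 0))) ∧
    HasSizeBias P (fun ω => ∑ j, (if X j ω then (1 : ℝ) else 0))
        (fun ω => ∑ j, (if Xc (I ω) j ω then (1 : ℝ) else 0)) := by
  classical
  have hXvm : Measurable (fun ω (j : Fin n) => X j ω) := measurable_pi_lambda _ hXm
  have hA : ∀ i, MeasurableSet {ω | X i ω = true} := fun i =>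
    (hXm i) (measurableSet_singleton true)
  have hbSm : Measurable (bS (n := n)) := Measurable.of_discrete
  have hint : ∀ (f : Ω → ℝ), Measurable f → ∀ C : ℝ, (∀ ω, |f ω| ≤ C) → Integrable f P :=
    fun f hf C hC => (integrable_const C).mono' hf.aestronglyMeasurable
      (ae_of_all _ (by simpa [Real.norm_eq_abs] using hC))
  -- key identity: for any measurable g and any i j,
  -- ∫ 1_{X_j} g(S X) = P(X_i = 1) * ∫ g(S Xc_i)
  have key : ∀ (g : ℝ → ℝ), Measurable g → ∀ i j : Fin n,
      ∫ ω, (if X j ω then (1:ℝ) else 0) * g (bS (fun k => X k ω)) ∂P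
        = (P {ω | X i ω = true}).toReal * ∫ ω, g (bS (fun k => Xc i k ω)) ∂P := by
    intro g hg i j
    have hFm : Measurable (fun v : Fin n → Bool => (if v i then (1:ℝ) else 0) * g (bS v)) :=
      Measurable.of_discrete
    have hGm : Measurable (fun v : Fin n → Bool => g (bS v)) := Measurable.of_discrete
    -- step 1: swap j to i using exchangeability
    have hswap : ∫ ω, (if X j ω then (1:ℝ) else 0) * g (bS (fun k => X k ω)) ∂P
        = ∫ ω, (if X i ω then (1:ℝ) else 0) * g (bS (fun k => X k ω)) ∂P := by
      set π := Equiv.swap i j with hπ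
      have hπm : Measurable (fun ω (k : Fin n) => X (π k) ω) :=
        measurable_pi_lambda _ fun k => hXm (π k)
      have h2 : ∫ v, (if v i then (1:ℝ) else 0) * g (bS v)
            ∂(Measure.map (fun ω (k : Fin n) => X (π k) ω) P)
          = ∫ v, (if v i then (1:ℝ) else 0) * g (bS v)
            ∂(Measure.map (fun ω (k : Fin n) => X k ω) P) := by rw [hexch π]
      rw [integral_map hπm.aemeasurable hFm.aestronglyMeasurable,
        integral_map hXvm.aemeasurable hFm.aestronglyMeasurable] at h2
      have h3 : π i = j := Equiv.swap_apply_left i j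
      have h4 : ∀ ω, bS (fun k => X (π k) ω) = bS (fun k => X k ω) := fun ω => by
        unfold bS; exact Equiv.sum_comp π (fun k => if X k ω then (1:ℝ) else 0)
      calc ∫ ω, (if X j ω then (1:ℝ) else 0) * g (bS (fun k => X k ω)) ∂P
          = ∫ ω, (if X (π i) ω then (1:ℝ) else 0) * g (bS (fun k => X (π k) ω)) ∂P := by
            refine integral_congr_ae (ae_of_all _ fun ω => ?_)
            show (if X j ω then (1:ℝ) else 0) * g (bS (fun k => X k ω))
              = (if X (π i) ω then (1:ℝ) else 0) * g (bS (fun k => X (π k) ω))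
            rw [h3, h4 ω]
        _ = ∫ ω, (if X i ω then (1:ℝ) else 0) * g (bS (fun k => X k ω)) ∂P := h2
    rw [hswap]
    -- step 2: condition on X_i = 1
    have hXcvm : Measurable (fun ω (k : Fin n) => Xc i k ω) :=
      measurable_pi_lambda _ (hXcm i)
    have hc : ∫ ω, g (bS (fun k => Xc i k ω)) ∂P
        = (P {ω | X i ω = true})⁻¹.toReal
            * ∫ ω, Set.indicator {ω | X i ω = true} (fun ω => g (bS (fun k => X k ω))) ω ∂P := by
      calc ∫ ω, g (bS (fun k => Xc i k ω)) ∂P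
          = ∫ v, g (bS v) ∂(Measure.map (fun ω (k : Fin n) => Xc i k ω) P) :=
            (integral_map hXcvm.aemeasurable hGm.aestronglyMeasurable).symm
        _ = ∫ v, g (bS v) ∂(Measure.map (fun ω (k : Fin n) => X k ω)
              (P[|{ω | X i ω = true}])) := by rw [hcond i]
        _ = ∫ ω, g (bS (fun k => X k ω)) ∂(P[|{ω | X i ω = true}]) :=
            integral_map hXvm.aemeasurable hGm.aestronglyMeasurable
        _ = (P {ω | X i ω = true})⁻¹.toReal
              * ∫ ω in {ω | X i ω = true}, g (bS (fun k => X k ω)) ∂P := by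
            rw [ProbabilityTheory.cond, integral_smul_measure, smul_eq_mul]
        _ = _ := by rw [integral_indicator (hA i)]
    rw [hc]
    have hne : (P {ω | X i ω = true}).toReal ≠ 0 := by
      have h0 := (hnontriv i).1
      have hfin : P {ω | X i ω = true} ≠ ⊤ := (measure_ne_top P _)
      simp [ENNReal.toReal_eq_zero_iff, h0.ne', hfin]
    rw [← mul_assoc, ENNReal.toReal_inv, mul_inv_cancel₀ hne, one_mul]
    refine integral_congr_ae (ae_of_all _ fun ω => ?_)
    by_cases h : X i ω = true <;> simp [Set.indicator, h]
  -- notation for the main quantities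
  set EX : ℝ := ∫ ω, bS (fun k => X k ω) ∂P with hEX
  -- first part
  have part1 : ∀ (i : Fin n) (g : ℝ → ℝ), Measurable g → (∃ C, ∀ x, |g x| ≤ C) →
      ∫ ω, bS (fun k => X k ω) * g (bS (fun k => X k ω)) ∂P
        = EX * ∫ ω, g (bS (fun k => Xc i k ω)) ∂P := by
    intro i g hg hb
    obtain ⟨C, hC⟩ := hb
    have hC0 : 0 ≤ C := le_trans (abs_nonneg _) (hC 0)
    have hsplit : ∀ (g : ℝ → ℝ), Measurable g → ∀ C : ℝ, (∀ x, |g x| ≤ C) →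
        ∫ ω, bS (fun k => X k ω) * g (bS (fun k => X k ω)) ∂P
          = ∑ j : Fin n, ∫ ω, (if X j ω then (1:ℝ) else 0) * g (bS (fun k => X k ω)) ∂P := by
      intro g hg C hC
      rw [← integral_finset_sum]
      · refine integral_congr_ae (ae_of_all _ fun ω => ?_)
        show bS (fun k => X k ω) * g (bS (fun k => X k ω))
          = ∑ j : Fin n, (if X j ω then (1:ℝ) else 0) * g (bS (fun k => X k ω))
        rw [← Finset.sum_mul]; rfl
      · intro j _
        refine hint _ ?_ C fun ω => ?_
        · exact ((measurable_const.ite ((hXm j) (measurableSet_singleton true)) measurable_const)).mul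
            (hg.comp (hbSm.comp hXvm))
        · rw [abs_mul]
          calc |if X j ω then (1:ℝ) else 0| * |g (bS fun k => X k ω)|
              ≤ 1 * C := by
                refine mul_le_mul ?_ (hC _) (abs_nonneg _) zero_le_one
                by_cases h : X j ω <;> simp [h]
            _ = C := one_mul C
    -- E X = n * p_i
    have hEX' : EX = (n : ℝ) * (P {ω | X i ω = true}).toReal := by
      have h1 : EX = ∫ ω, bS (fun k => X k ω) * (1:ℝ) ∂P := by
        rw [hEX]; exact integral_congr_ae (ae_of_all _ fun ω => (mul_one _).symm)
      rw [h1, hsplit (fun _ => (1:ℝ)) measurable_const 1 (fun x => by simp)]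
      have h2 : ∀ j : Fin n, ∫ ω, (if X j ω then (1:ℝ) else 0) * (fun _ : ℝ => (1:ℝ)) (bS (fun k => X k ω)) ∂P
          = (P {ω | X i ω = true}).toReal := by
        intro j
        rw [key (fun _ => (1:ℝ)) measurable_const i j]
        simp
      calc ∑ j : Fin n, ∫ ω, (if X j ω then (1:ℝ) else 0) * (1:ℝ) ∂P
          = ∑ _j : Fin n, (P {ω | X i ω = true}).toReal := Finset.sum_congr rfl fun j _ => h2 j
        _ = (n : ℝ) * (P {ω | X i ω = true}).toReal := by simp [Finset.sum_const, nsmul_eq_mul]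
    rw [hsplit g hg C hC]
    have h3 : ∀ j : Fin n, ∫ ω, (if X j ω then (1:ℝ) else 0) * g (bS (fun k => X k ω)) ∂P
        = (P {ω | X i ω = true}).toReal * ∫ ω, g (bS (fun k => Xc i k ω)) ∂P :=
      fun j => key g hg i j
    calc ∑ j : Fin n, ∫ ω, (if X j ω then (1:ℝ) else 0) * g (bS (fun k => X k ω)) ∂P
        = ∑ _j : Fin n, (P {ω | X i ω = true}).toReal * ∫ ω, g (bS (fun k => Xc i k ω)) ∂P :=
          Finset.sum_congr rfl fun j _ => h3 j
      _ = (n : ℝ) * ((P {ω | X i ω = true}).toReal * ∫ ω, g (bS (fun k => Xc i k ω)) ∂P) := by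
          simp [Finset.sum_const, nsmul_eq_mul]
      _ = EX * ∫ ω, g (bS (fun k => Xc i k ω)) ∂P := by rw [hEX']; ring
  constructor
  · intro i g hg hb
    exact part1 i g hg hb
  · intro g hg hb
    obtain ⟨C, hC⟩ := hb
    have hC0 : 0 ≤ C := le_trans (abs_nonneg _) (hC 0)
    -- decompose the mixture
    have hmix : ∀ ω, g (bS (fun j => Xc (I ω) j ω))
        = ∑ i : Fin n, (if I ω = i then (1:ℝ) else 0) * g (bS (fun j => Xc i j ω)) := by
      intro ω
      rw [Finset.sum_congr rfl (fun i _ => by rw [ite_mul, one_mul, zero_mul]),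
        Finset.sum_ite_eq]
      simp
    -- independence: each term factorizes
    have hfac : ∀ i : Fin n,
        ∫ ω, (if I ω = i then (1:ℝ) else 0) * g (bS (fun j => Xc i j ω)) ∂P
          = (∫ ω, (if I ω = i then (1:ℝ) else 0) ∂P) * ∫ ω, g (bS (fun j => Xc i j ω)) ∂P := by
      intro i
      have hφ : Measurable (fun k : Fin n => if k = i then (1:ℝ) else 0) :=
        Measurable.of_discrete
      have hin : Measurable (fun p : (Fin n → Fin n → Bool) × (Fin n → Bool) =>
          bS (fun j => p.1 i j)) := Measurable.of_discrete
      have hψ : Measurable (fun p : (Fin n → Fin n → Bool) × (Fin n → Bool) =>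
          g (bS (fun j => p.1 i j))) := hg.comp hin
      have hi : IndepFun (fun ω => if I ω = i then (1:ℝ) else 0)
          (fun ω => g (bS (fun j => Xc i j ω))) P := hindep.comp hφ hψ
      have hm1 : Measurable (fun ω => if I ω = i then (1:ℝ) else 0) := hφ.comp hIm
      have hm2 : Measurable (fun ω => g (bS (fun j => Xc i j ω))) :=
        hg.comp (hbSm.comp (measurable_pi_lambda _ (hXcm i)))
      exact hi.integral_mul_eq_mul_integral hm1.aestronglyMeasurable hm2.aestronglyMeasurable
    have hq1 : ∑ i : Fin n, ∫ ω, (if I ω = i then (1:ℝ) else 0) ∂P = 1 := by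
      rw [← integral_finset_sum]
      · have : ∀ ω : Ω, (∑ i : Fin n, if I ω = i then (1:ℝ) else 0) = 1 := fun ω => by
          rw [Finset.sum_ite_eq]; simp
        rw [integral_congr_ae (ae_of_all _ this)]
        simp
      · intro i _
        refine hint _ ((measurable_const.ite (hIm (measurableSet_singleton i)) measurable_const)) 1
          fun ω => ?_
        by_cases h : I ω = i <;> simp [h]
    have hsum2 : ∫ ω, g (bS (fun j => Xc (I ω) j ω)) ∂P
        = ∑ i : Fin n, (∫ ω, (if I ω = i then (1:ℝ) else 0) ∂P)
            * ∫ ω, g (bS (fun j => Xc i j ω)) ∂P := by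
      rw [integral_congr_ae (ae_of_all _ hmix), integral_finset_sum]
      · exact Finset.sum_congr rfl fun i _ => hfac i
      · intro i _
        refine hint _ ?_ C fun ω => ?_
        · exact ((measurable_const.ite (hIm (measurableSet_singleton i)) measurable_const)).mul
            (hg.comp (hbSm.comp (measurable_pi_lambda _ (hXcm i))))
        · rw [abs_mul]
          calc |if I ω = i then (1:ℝ) else 0| * |g (bS fun j => Xc i j ω)| ≤ 1 * C := by
                refine mul_le_mul ?_ (hC _) (abs_nonneg _) zero_le_one
                by_cases h : I ω = i <;> simp [h]
            _ = C := one_mul C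
    have hgoal : ∫ ω, bS (fun k => X k ω) * g (bS (fun k => X k ω)) ∂P
        = EX * ∫ ω, g (bS (fun j => Xc (I ω) j ω)) ∂P := by
      rw [hsum2, Finset.mul_sum]
      have h4 : ∀ i : Fin n, EX * ((∫ ω, (if I ω = i then (1:ℝ) else 0) ∂P)
            * ∫ ω, g (bS (fun j => Xc i j ω)) ∂P)
          = (∫ ω, (if I ω = i then (1:ℝ) else 0) ∂P)
            * ∫ ω, bS (fun k => X k ω) * g (bS (fun k => X k ω)) ∂P := by
        intro i
        rw [part1 i g hg ⟨C, hC⟩]; ring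
      rw [Finset.sum_congr rfl fun i _ => h4 i, ← Finset.sum_mul, hq1, one_mul]
    exact hgoal
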